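/- Let G = (V, E) be a cubic graph and let (X, Y) be the corresponding instance of MLA. Then the minimum cost of a feasible labeling of (X, Y) is at most 41·τ(G), where τ(G) denotes the minimum size of a vertex cover of G. -/

import Mathlib

namespace MLA

/-! ### Generic labelings of aligned genomes -/

/-- An operation labeling a substring of the genome `X`: the substring of length
`len` starting at position `start`; `src = none` means a loss, `src = some s`
means a duplication coming from the identical occurrence starting at `s`. -/
structure Op where
  start : ℕ
  len : ℕ
  src : Option ℕ
deriving DecidableEq

/-- Cost of an operation: a duplication costs `1`, a loss of length `z` costs `z`. -/
def Op.cost (o : Op) : ℕ := if o.src = none then o.len else 1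

/-- The positions covered by (the target substring of) an operation. -/
def Op.covers (o : Op) (p : ℕ) : Prop := o.start ≤ p ∧ p < o.start + o.len

instance (o : Op) (p : ℕ) : Decidable (o.covers p) := by
  unfold Op.covers; infer_instance

/-- Validity of an operation with respect to the genome `X`: nonempty target
inside `X`, and a duplication comes from a different occurrence in `X` of a
string identical to its target substring. -/
def Op.valid {α : Type*} (X : List α) (o : Op) : Prop :=
  1 ≤ o.len ∧ o.start + o.len ≤ X.length ∧
    ∀ s, o.src = some s → s ≠ o.start ∧ s + o.len ≤ X.length ∧
      ∀ t < o.len, X[s + t]? = X[o.start + t]?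

/-- A duplication from occurrence `s` to occurrence `t` is maximal if the
characters immediately to the left of `s` and `t` differ (or one does not
exist) and likewise on the right. -/
def Op.maximalDup {α : Type*} (X : List α) (o : Op) : Prop :=
  ∃ s, o.src = some s ∧
    (s = 0 ∨ o.start = 0 ∨ X[s - 1]? ≠ X[o.start - 1]?) ∧
    (X[s + o.len]? = none ∨ X[o.start + o.len]? = none ∨
      X[s + o.len]? ≠ X[o.start + o.len]?)

/-- `L` is a labeling of the set `U` of unmatched positions of the genome `X`:
the target substrings of its operations are valid and partition `U`. -/
structure IsLabeling {α : Type*} (X : List α) (U : ℕ → Prop) (L : Finset Op) :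
    Prop where
  valid : ∀ o ∈ L, o.valid X
  unmatched : ∀ o ∈ L, ∀ p, o.covers p → U p
  covers : ∀ p, U p → ∃ o ∈ L, o.covers p
  disjoint : ∀ o ∈ L, ∀ o' ∈ L, ∀ p, o.covers p → o'.covers p → o = o'

/-- Arc of the duplication graph of a labeling: from the operation owning part
of the source occurrence of a duplication to the duplication itself. -/
def dupArc (L : Finset Op) (o o' : Op) : Prop :=
  o ∈ L ∧ o' ∈ L ∧ ∃ s, o'.src = some s ∧ ∃ p, o.covers p ∧ s ≤ p ∧ p < s + o'.len

/-- A labeling is feasible if its duplication graph has no cycle. -/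
def Feasible (L : Finset Op) : Prop := ∀ o, ¬ Relation.TransGen (dupArc L) o o

/-- Cost of a labeling. -/
def cost (L : Finset Op) : ℕ := ∑ o ∈ L, o.cost

/-- The operations of `L` labeling some position in `[lo, hi)`. -/
def restrict (L : Finset Op) (lo hi : ℕ) : Finset Op :=
  L.filter fun o => ∃ p ∈ Finset.Ico lo hi, o.covers p

/-- The total cost of the operations of `L` labeling positions in `[lo, hi)`. -/
def blockCost (L : Finset Op) (lo hi : ℕ) : ℕ := cost (restrict L lo hi)

/-! ### The reduction from Minimum Vertex Cover on cubic graphs -/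

/-- The alphabet of the reduction (all symbols are pairwise distinct). -/
inductive Sym (n : ℕ) : Type
  | s  (i : Fin n)
  | se (i j : Fin n)
  | x  (i : Fin n) (p : ℕ)
  | e  (i j : Fin n) (t : Fin 2)
  | z  (i : Fin n) (t : Fin 8)
  | w  (i : Fin n) (t : Fin 4)
  | u  (i : Fin n) (t : Fin 6)
deriving DecidableEq

variable {n : ℕ} (G : SimpleGraph (Fin n)) [DecidableRel G.Adj]

/-- The edges of `G` as pairs `(i, j)` with `i < j`, in lexicographic order. -/
def edgePairs : List (Fin n × Fin n) :=
  (List.finRange n).flatMap fun i =>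
    ((List.finRange n).filter fun j => decide (i < j ∧ G.Adj i j)).map fun j => (i, j)

/-- The edges incident to `i`, in edge order. -/
def incEdges (i : Fin n) : List (Fin n × Fin n) :=
  (edgePairs G).filter fun e => decide (e.1 = i ∨ e.2 = i)

/-- The `t`-th (`0`-based) edge incident to `i`. -/
def nthInc (i : Fin n) (t : ℕ) : Fin n × Fin n := (incEdges G i).getD t (i, i)

/-- The `0`-based index of edge `e` among the edges incident to `i`. -/
def edgeIdx (i : Fin n) (e : Fin n × Fin n) : ℕ := (incEdges G i).idxOf e

/-- Left part of the `i`-encoding of edge `e`. -/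
def encL (i : Fin n) (e : Fin n × Fin n) : List (Sym n) :=
  if i = e.1 then [.x i (edgeIdx G i e)] else [.e e.1 e.2 0, .e e.1 e.2 1]

/-- Right part of the `i`-encoding of edge `e`. -/
def encR (i : Fin n) (e : Fin n × Fin n) : List (Sym n) :=
  if i = e.1 then [.e e.1 e.2 0, .e e.1 e.2 1] else [.x i (edgeIdx G i e)]

/-- The `i`-encoding of edge `e`. -/
def enc (i : Fin n) (e : Fin n × Fin n) : List (Sym n) := encL G i e ++ encR G i e

/-- Block `B_{X-VE}(e)`. -/
def edgeBlockX (e : Fin n × Fin n) : List (Sym n) :=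
  [.se e.1 e.2, .x e.1 (edgeIdx G e.1 e), .e e.1 e.2 0, .e e.1 e.2 1,
   .x e.2 (edgeIdx G e.2 e)]

/-- Block `B_{X-VE}(v_i)`. -/
def vertexBlockX (i : Fin n) : List (Sym n) :=
  [.s i, .z i 0, .z i 1] ++ enc G i (nthInc G i 0) ++
  [.z i 2, .z i 3] ++ enc G i (nthInc G i 1) ++
  [.z i 4, .z i 5] ++ enc G i (nthInc G i 2) ++
  [.z i 6, .z i 7]

/-- Block `B_{X,A,1}(v_i) = B_{Y,A,1}(v_i)`. -/
def A1Block (i : Fin n) : List (Sym n) :=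
  [.w i 0, .z i 0, .z i 1, .w i 1, .z i 2, .z i 3,
   .w i 2, .z i 4, .z i 5, .w i 3, .z i 6, .z i 7]

/-- Block `B_{X,A,2}(v_i) = B_{Y,A,2}(v_i)`. -/
def A2Block (i : Fin n) : List (Sym n) :=
  [.u i 0, .z i 1] ++ encL G i (nthInc G i 0) ++ [.u i 1] ++ encR G i (nthInc G i 0) ++
  [.z i 2, .u i 2, .z i 3] ++ encL G i (nthInc G i 1) ++ [.u i 3] ++ encR G i (nthInc G i 1) ++
  [.z i 4, .u i 4, .z i 5] ++ encL G i (nthInc G i 2) ++ [.u i 5] ++ encR G i (nthInc G i 2) ++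
  [.z i 6]

/-- The genome `X` corresponding to the cubic graph `G`. -/
def genomeX : List (Sym n) :=
  ((List.finRange n).flatMap fun i => vertexBlockX G i) ++
  ((edgePairs G).flatMap fun e => edgeBlockX G e) ++
  ((List.finRange n).flatMap fun i => A1Block i ++ A2Block G i)

/-- The aligned genome `Y` (`none` denotes a gap). -/
def alignedY : List (Option (Sym n)) :=
  ((List.finRange n).flatMap fun i => some (.s i) :: List.replicate 17 none) ++
  ((edgePairs G).flatMap fun e => some (.se e.1 e.2) :: List.replicate 4 none) ++
  ((List.finRange n).flatMap fun i => (A1Block i ++ A2Block G i).map some)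

/-- The unmatched positions of `X` (those aligned with a gap of `Y`). -/
def UnmatchedX (p : ℕ) : Prop := (alignedY G)[p]? = some none

/-- Start position of `B_{X-VE}(v_i)` in `X`. -/
def vStart (i : Fin n) : ℕ := 18 * i.val

/-- Start position of `B_{X-VE}(e)` in `X`. -/
def eStart (e : Fin n × Fin n) : ℕ := 18 * n + 5 * (edgePairs G).idxOf e

/-- Start position of `B_{X,A,1}(v_i)` in `X` (`B_{X,A,2}(v_i)` starts 12 later). -/
def aStart (i : Fin n) : ℕ := 18 * n + 5 * (edgePairs G).length + 33 * i.val

/-- Offset of the `i`-encoding inside `B_{X-VE}(e)`. -/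
def encOff (i : Fin n) (e : Fin n × Fin n) : ℕ := if i = e.1 then 1 else 2

/-- The type-a labeling of `B_{X-VE}(v_i)`: four duplications coming from
`B_{X,A,1}(v_i)` (for the pairs of `z`-symbols) and three duplications coming
from the blocks of the three edges incident to `v_i` (for the encodings). -/
def typeA (i : Fin n) : Finset Op :=
  { ⟨vStart i + 1, 2, some (aStart G i + 1)⟩,
    ⟨vStart i + 6, 2, some (aStart G i + 4)⟩,
    ⟨vStart i + 11, 2, some (aStart G i + 7)⟩,
    ⟨vStart i + 16, 2, some (aStart G i + 10)⟩,
    ⟨vStart i + 3, 3, some (eStart G (nthInc G i 0) + encOff i (nthInc G i 0))⟩,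
    ⟨vStart i + 8, 3, some (eStart G (nthInc G i 1) + encOff i (nthInc G i 1))⟩,
    ⟨vStart i + 13, 3, some (eStart G (nthInc G i 2) + encOff i (nthInc G i 2))⟩ }

/-- The type-b labeling of `B_{X-VE}(v_i)`: six duplications coming from
`B_{X,A,2}(v_i)` and two losses of length one (for `z_{i,1}` and `z_{i,8}`). -/
def typeB (i : Fin n) : Finset Op :=
  let a := aStart G i + 12
  let l1 := (encL G i (nthInc G i 0)).length
  let l2 := (encL G i (nthInc G i 1)).length
  let l3 := (encL G i (nthInc G i 2)).length
  { ⟨vStart i + 1, 1, none⟩,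
    ⟨vStart i + 17, 1, none⟩,
    ⟨vStart i + 2, 1 + l1, some (a + 1)⟩,
    ⟨vStart i + 3 + l1, 4 - l1, some (a + 3 + l1)⟩,
    ⟨vStart i + 7, 1 + l2, some (a + 8)⟩,
    ⟨vStart i + 8 + l2, 4 - l2, some (a + 10 + l2)⟩,
    ⟨vStart i + 12, 1 + l3, some (a + 15)⟩,
    ⟨vStart i + 13 + l3, 4 - l3, some (a + 17 + l3)⟩ }

/-- The cost-2 labeling of `B_{X-VE}(e)` using a duplication coming from
`B_{X-VE}(v_i)` (where `i = e.1`) and a loss for the last character. -/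
def edgeLabA (e : Fin n × Fin n) : Finset Op :=
  { ⟨eStart G e + 1, 3, some (vStart e.1 + 3 + 5 * edgeIdx G e.1 e)⟩,
    ⟨eStart G e + 4, 1, none⟩ }

/-- The cost-2 labeling of `B_{X-VE}(e)` using a duplication coming from
`B_{X-VE}(v_j)` (where `j = e.2`) and a loss for the second character. -/
def edgeLabB (e : Fin n × Fin n) : Finset Op :=
  { ⟨eStart G e + 2, 3, some (vStart e.2 + 3 + 5 * edgeIdx G e.2 e)⟩,
    ⟨eStart G e + 1, 1, none⟩ }

/-- `C` is a vertex cover of `G`. -/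
def IsVC (C : Finset (Fin n)) : Prop := ∀ ⦃u v : Fin n⦄, G.Adj u v → u ∈ C ∨ v ∈ C



lemma sum_toFinset_le {α : Type*} [DecidableEq α] (f : α → ℕ) :
    ∀ l : List α, ∑ x ∈ l.toFinset, f x ≤ (l.map f).sum := by
  intro l
  induction l with
  | nil => simp
  | cons a l ih =>
    simp only [List.toFinset_cons, List.map_cons, List.sum_cons]
    by_cases h : a ∈ l.toFinset
    · rw [Finset.insert_eq_self.2 h]; omega
    · rw [Finset.sum_insert h]; omega

lemma map_flatMap_sum {α β : Type*} (f : α → List β) (g : β → ℕ) :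
    ∀ l : List α, ((l.flatMap f).map g).sum = (l.map fun a => ((f a).map g).sum).sum := by
  intro l
  induction l with
  | nil => simp
  | cons a l ih => simp [ih]

lemma sum_map_const {α : Type*} (c : ℕ) : ∀ l : List α, (l.map fun _ => c).sum = c * l.length := by
  intro l; induction l with
  | nil => simp
  | cons a l ih => simp [ih]; ring

lemma length_flatMap_const {α β : Type*} (f : α → List β) (c : ℕ) :
    ∀ l : List α, (∀ a ∈ l, (f a).length = c) → (l.flatMap f).length = c * l.length := by
  intro l h
  induction l with
  | nil => simp
  | cons a l ih =>
    simp only [List.flatMap_cons, List.length_append, h a (by simp), List.length_cons,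
      ih fun a ha => h a (by simp [ha])]
    ring

lemma getElem?_flatMap_const {α β : Type*} (f : α → List β) (c : ℕ)
    (l : List α) (h : ∀ a ∈ l, (f a).length = c)
    (k t : ℕ) (ht : t < c) (hk : k < l.length) :
    (l.flatMap f)[c * k + t]? = (f l[k])[t]? := by
  induction l generalizing k with
  | nil => simp at hk
  | cons a l ih =>
    cases k with
    | zero =>
      simp only [List.flatMap_cons, List.getElem?_append, Nat.mul_zero, Nat.zero_add]
      rw [if_pos]; · simp
      · rw [h a (by simp)]; omega
    | succ k =>
      rw [List.flatMap_cons, List.getElem?_append_right (by rw [h a (by simp)]; nlinarith)]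
      rw [h a (by simp)]
      have : c * (k + 1) + t - c = c * k + t := by ring_nf; omega
      rw [this]
      simpa using ih (fun a ha => h a (by simp [ha])) k (by simpa using hk)


section Reduction
variable {n : ℕ} (G : SimpleGraph (Fin n)) [DecidableRel G.Adj]

lemma mem_edgePairs {e : Fin n × Fin n} :
    e ∈ edgePairs G ↔ e.1 < e.2 ∧ G.Adj e.1 e.2 := by
  obtain ⟨a, b⟩ := e
  constructor
  · intro h
    simp only [edgePairs, List.mem_flatMap, List.mem_map, List.mem_filter] at h
    obtain ⟨i, _, j, hj, hab⟩ := h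
    obtain ⟨rfl, rfl⟩ : i = a ∧ j = b := ⟨congrArg Prod.fst hab, congrArg Prod.snd hab⟩
    simpa using hj.2
  · rintro ⟨h1, h2⟩
    simp only [edgePairs, List.mem_flatMap, List.mem_map, List.mem_filter]
    exact ⟨a, List.mem_finRange a, b, ⟨List.mem_finRange b, by simp [h1, h2]⟩, rfl⟩

lemma nodup_edgePairs : (edgePairs G).Nodup := by
  rw [edgePairs, List.nodup_flatMap]
  constructor
  · intro i _
    exact ((List.nodup_finRange n).filter _).map (by intro a b h; simpa using h)
  · refine List.Pairwise.imp ?_ (List.pairwise_lt_finRange n)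
    intro i j hij p hp hq
    simp only [Function.comp, List.mem_map, List.mem_filter] at hp hq
    obtain ⟨a, _, rfl⟩ := hp
    obtain ⟨b, _, h⟩ := hq
    exact absurd (congrArg Prod.fst h.symm) (by simpa using hij.ne)

lemma mem_incEdges {i : Fin n} {e : Fin n × Fin n} :
    e ∈ incEdges G i ↔ e ∈ edgePairs G ∧ (e.1 = i ∨ e.2 = i) := by
  simp [incEdges, List.mem_filter]

lemma three_le_length_incEdges (i : Fin n) (hdeg : G.degree i = 3) :
    3 ≤ (incEdges G i).length := by
  have hcard : (G.neighborFinset i).card = 3 := by rwa [G.card_neighborFinset_eq_degree]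
  have hinj : ∀ j ∈ G.neighborFinset i,
      (if i < j then (i, j) else (j, i)) ∈ (incEdges G i).toFinset := by
    intro j hj
    rw [SimpleGraph.mem_neighborFinset] at hj
    rw [List.mem_toFinset, mem_incEdges, mem_edgePairs]
    rcases lt_or_gt_of_ne (G.ne_of_adj hj) with h | h
    · simp [h, hj]
    · rw [if_neg (by omega)]
      exact ⟨⟨h, hj.symm⟩, Or.inr rfl⟩
  have := Finset.card_le_card_of_injOn _ hinj ?_
  · calc 3 = (G.neighborFinset i).card := hcard.symm
      _ ≤ (incEdges G i).toFinset.card := this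
      _ ≤ (incEdges G i).length := (incEdges G i).toFinset_card_le
  · intro a ha b hb hab
    simp only [Finset.mem_coe, SimpleGraph.mem_neighborFinset] at ha hb
    simp only at hab
    have hai := G.ne_of_adj ha
    have hbi := G.ne_of_adj hb
    split_ifs at hab with h1 h2 h2 <;>
      [skip; exact absurd (congrArg Prod.snd hab) (by simp; omega);
       exact absurd (congrArg Prod.fst hab) (by simp; omega); skip] <;>
    · first
      | exact congrArg Prod.snd hab
      | exact congrArg Prod.fst hab

lemma nthInc_mem {i : Fin n} (hdeg : G.degree i = 3) {k : ℕ} (hk : k < 3) :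
    nthInc G i k ∈ incEdges G i := by
  rw [nthInc, List.getD_eq_getElem?_getD]
  have hlt : k < (incEdges G i).length := lt_of_lt_of_le hk (three_le_length_incEdges G i hdeg)
  rw [List.getElem?_eq_getElem hlt]
  exact List.getElem_mem _


lemma getElem?_flatMap_const' {α β : Type*} (f : α → List β) (c : ℕ)
    (l : List α) (h : ∀ a ∈ l, (f a).length = c)
    (p : ℕ) (hc : 0 < c) (hk : p / c < l.length) :
    (l.flatMap f)[p]? = (f (l[p / c]'hk))[p % c]? := by
  conv_lhs => rw [← Nat.div_add_mod p c]
  exact getElem?_flatMap_const f c l h _ _ (Nat.mod_lt _ hc) hk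

lemma idxOf_spec {α : Type*} [BEq α] [LawfulBEq α] (a : α)
    (l : List α) (h : a ∈ l) :
    List.idxOf a l < l.length ∧ l[List.idxOf a l]? = some a := by
  induction l with
  | nil => simp at h
  | cons b l ih =>
    rw [List.idxOf_cons]
    by_cases hb : b = a
    · subst hb; simp
    · have hba : (b == a) = false := by simpa using hb
      rw [hba]
      simp only [cond_false]
      have := ih (by rcases List.mem_cons.1 h with h | h; exacts [absurd h.symm hb, h])
      refine ⟨by simpa using this.1, ?_⟩
      simpa using this.2

lemma encL_length (i : Fin n) (e : Fin n × Fin n) :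
    (encL G i e).length = if i = e.1 then 1 else 2 := by
  rw [encL]; split_ifs <;> rfl

lemma encR_length (i : Fin n) (e : Fin n × Fin n) :
    (encR G i e).length = if i = e.1 then 2 else 1 := by
  rw [encR]; split_ifs <;> rfl

lemma enc_length (i : Fin n) (e : Fin n × Fin n) : (enc G i e).length = 3 := by
  rw [enc, List.length_append, encL_length, encR_length]; split_ifs <;> rfl

lemma vertexBlockX_length (i : Fin n) : (vertexBlockX G i).length = 18 := by
  simp [vertexBlockX, enc_length]

lemma edgeBlockX_length (e : Fin n × Fin n) : (edgeBlockX G e).length = 5 := rfl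

lemma A1Block_length (i : Fin n) : (A1Block i : List (Sym n)).length = 12 := rfl

lemma A2Block_length (i : Fin n) : (A2Block G i).length = 21 := by
  simp [A2Block, encL_length, encR_length]
  split_ifs <;> simp

lemma ABlock_length (i : Fin n) : ((A1Block i ++ A2Block G i : List (Sym n))).length = 33 := by
  rw [List.length_append, A1Block_length, A2Block_length]

lemma genomeX_length :
    (genomeX G).length = 18 * n + 5 * (edgePairs G).length + 33 * n := by
  rw [genomeX, List.length_append, List.length_append,
    length_flatMap_const _ 18 _ (fun i _ => vertexBlockX_length G i),
    length_flatMap_const _ 5 _ (fun e _ => edgeBlockX_length G e),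
    length_flatMap_const _ 33 _ (fun i _ => ABlock_length G i)]
  simp [List.length_finRange]

lemma getX_v (i : Fin n) (t : ℕ) (ht : t < 18) :
    (genomeX G)[18 * i.val + t]? = (vertexBlockX G i)[t]? := by
  rw [genomeX, List.append_assoc, List.getElem?_append, if_pos]
  · rw [getElem?_flatMap_const _ 18 _ (fun i _ => vertexBlockX_length G i) i.val t ht
      (by simp [List.length_finRange])]
    simp
  · rw [length_flatMap_const _ 18 _ (fun i _ => vertexBlockX_length G i)]
    simp only [List.length_finRange]
    have := i.isLt; nlinarith

lemma getX_e {e : Fin n × Fin n} (he : e ∈ edgePairs G) (t : ℕ) (ht : t < 5) :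
    (genomeX G)[eStart G e + t]? = (edgeBlockX G e)[t]? := by
  have hspec := idxOf_spec e (edgePairs G) he
  have hidx := hspec.1
  have hget : (edgePairs G)[(edgePairs G).idxOf e]'hidx = e := by
    have h2 := hspec.2
    rwa [List.getElem?_eq_getElem hidx, Option.some_inj] at h2
  rw [genomeX, List.append_assoc,
    List.getElem?_append_right (by
      rw [length_flatMap_const _ 18 _ (fun i _ => vertexBlockX_length G i)]
      simp only [List.length_finRange]
      rw [eStart]; omega),
    length_flatMap_const _ 18 _ (fun i _ => vertexBlockX_length G i)]
  simp only [List.length_finRange]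
  have h2 : eStart G e + t - 18 * n = 5 * (edgePairs G).idxOf e + t := by
    rw [eStart]; omega
  rw [h2, List.getElem?_append, if_pos (by
    rw [length_flatMap_const _ 5 _ (fun e _ => edgeBlockX_length G e)]; nlinarith),
    getElem?_flatMap_const _ 5 _ (fun e _ => edgeBlockX_length G e) _ t ht hidx, hget]

lemma getX_a (i : Fin n) (t : ℕ) (ht : t < 33) :
    (genomeX G)[aStart G i + t]? = (A1Block i ++ A2Block G i)[t]? := by
  rw [genomeX, List.append_assoc,
    List.getElem?_append_right (by
      rw [length_flatMap_const _ 18 _ (fun i _ => vertexBlockX_length G i)]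
      simp only [List.length_finRange]; rw [aStart]; omega),
    length_flatMap_const _ 18 _ (fun i _ => vertexBlockX_length G i)]
  simp only [List.length_finRange]
  have h2 : aStart G i + t - 18 * n = 5 * (edgePairs G).length + (33 * i.val + t) := by
    rw [aStart]; omega
  rw [h2, List.getElem?_append_right (by
      rw [length_flatMap_const _ 5 _ (fun e _ => edgeBlockX_length G e)]; omega),
    length_flatMap_const _ 5 _ (fun e _ => edgeBlockX_length G e)]
  have h3 : 5 * (edgePairs G).length + (33 * i.val + t) - 5 * (edgePairs G).length
      = 33 * i.val + t := by omega
  rw [h3, getElem?_flatMap_const _ 33 _ (fun i _ => ABlock_length G i) i.val t ht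
    (by simp [List.length_finRange])]
  simp


lemma unmatched_iff (p : ℕ) :
    UnmatchedX G p ↔
      (p < 18 * n ∧ p % 18 ≠ 0) ∨
      (18 * n ≤ p ∧ p < 18 * n + 5 * (edgePairs G).length ∧ (p - 18 * n) % 5 ≠ 0) := by
  have hv : ∀ i : Fin n, ((some (Sym.s i) : Option (Sym n)) :: List.replicate 17 none).length = 18 := by
    intro i; simp
  have he : ∀ e ∈ edgePairs G,
      ((some (Sym.se e.1 e.2) : Option (Sym n)) :: List.replicate 4 none).length = 5 := by
    intro e _; simp
  have ha : ∀ i : Fin n, ((A1Block i ++ A2Block G i).map some).length = 33 := by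
    intro i; rw [List.length_map, ABlock_length]
  rw [UnmatchedX, alignedY]
  set M := (edgePairs G).length with hM
  rcases lt_or_ge p (18 * n) with h1 | h1
  · rw [List.append_assoc, List.getElem?_append, if_pos (by
      rw [length_flatMap_const _ 18 _ fun i _ => hv i]; simpa using h1)]
    rw [getElem?_flatMap_const' _ 18 _ (fun i _ => hv i) p (by omega)
      (by simpa using (by omega : p / 18 < n))]
    rcases Nat.eq_zero_or_pos (p % 18) with h0 | h0
    · rw [h0]
      simp only [List.getElem?_cons_zero]
      constructor
      · intro h; exact absurd (Option.some_inj.1 h) (by simp)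
      · intro h; omega
    · rw [show p % 18 = (p % 18 - 1) + 1 by omega, List.getElem?_cons_succ,
        List.getElem?_replicate, if_pos (by omega : p % 18 - 1 < 17)]
      constructor
      · intro _; exact Or.inl ⟨h1, by omega⟩
      · intro _; rfl
  · rw [List.append_assoc, List.getElem?_append_right (by
      rw [length_flatMap_const _ 18 _ fun i _ => hv i]; simpa using h1),
      length_flatMap_const _ 18 _ fun i _ => hv i]
    simp only [List.length_finRange]
    rcases lt_or_ge p (18 * n + 5 * M) with h2 | h2
    · rw [List.getElem?_append, if_pos (by
        rw [length_flatMap_const _ 5 _ he]; omega)]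
      rw [getElem?_flatMap_const' _ 5 _ he (p - 18 * n) (by omega) (by omega)]
      rcases Nat.eq_zero_or_pos ((p - 18 * n) % 5) with h0 | h0
      · rw [h0]
        simp only [List.getElem?_cons_zero]
        constructor
        · intro h; exact absurd (Option.some_inj.1 h) (by simp)
        · intro h; omega
      · rw [show (p - 18 * n) % 5 = ((p - 18 * n) % 5 - 1) + 1 by omega,
          List.getElem?_cons_succ, List.getElem?_replicate,
          if_pos (by omega : (p - 18 * n) % 5 - 1 < 4)]
        constructor
        · intro _; exact Or.inr ⟨h1, h2, by omega⟩
        · intro _; rfl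
    · rw [List.getElem?_append_right (by rw [length_flatMap_const _ 5 _ he]; omega),
        length_flatMap_const _ 5 _ he]
      rcases lt_or_ge (p - 18 * n - 5 * M) (33 * n) with h3 | h3
      · rw [getElem?_flatMap_const' _ 33 _ (fun i _ => ha i) _ (by omega)
          (by simpa using (by omega : (p - 18 * n - 5 * M) / 33 < n))]
        rw [List.getElem?_map, List.getElem?_eq_getElem (by
          rw [ABlock_length]; omega : (p - 18 * n - 5 * M) % 33 < _)]
        simp only [Option.map_some]
        constructor
        · intro h; exact absurd (Option.some_inj.1 h) (by simp)
        · intro h; omega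
      · rw [List.getElem?_eq_none (by
          rw [length_flatMap_const _ 33 _ (fun i _ => ha i)]; simpa using h3)]
        constructor
        · intro h; exact absurd h (by simp)
        · intro h; omega


lemma exists_list3 {α : Type*} (l : List α) (h : l.length = 3) :
    ∃ a b c, l = [a, b, c] := by
  match l, h with
  | [a, b, c], _ => exact ⟨a, b, c, rfl⟩

lemma vb_get (i : Fin n) :
    ∃ a₀ a₁ a₂ b₀ b₁ b₂ c₀ c₁ c₂ : Sym n,
      enc G i (nthInc G i 0) = [a₀, a₁, a₂] ∧
      enc G i (nthInc G i 1) = [b₀, b₁, b₂] ∧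
      enc G i (nthInc G i 2) = [c₀, c₁, c₂] ∧
      vertexBlockX G i = [.s i, .z i 0, .z i 1, a₀, a₁, a₂, .z i 2, .z i 3,
        b₀, b₁, b₂, .z i 4, .z i 5, c₀, c₁, c₂, .z i 6, .z i 7] := by
  obtain ⟨a₀, a₁, a₂, h0⟩ := exists_list3 _ (enc_length G i (nthInc G i 0))
  obtain ⟨b₀, b₁, b₂, h1⟩ := exists_list3 _ (enc_length G i (nthInc G i 1))
  obtain ⟨c₀, c₁, c₂, h2⟩ := exists_list3 _ (enc_length G i (nthInc G i 2))
  refine ⟨a₀, a₁, a₂, b₀, b₁, b₂, c₀, c₁, c₂, h0, h1, h2, ?_⟩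
  rw [vertexBlockX, h0, h1, h2]; rfl

lemma getX_vz (i : Fin n) (k t : ℕ) (hk : k < 4) (ht : t < 2) :
    (genomeX G)[aStart G i + (1 + 3 * k) + t]? =
      (genomeX G)[18 * i.val + (1 + 5 * k) + t]? := by
  obtain ⟨a₀, a₁, a₂, b₀, b₁, b₂, c₀, c₁, c₂, _, _, _, hvb⟩ := vb_get G i
  have h1 : (genomeX G)[aStart G i + (1 + 3 * k) + t]?
      = (A1Block i ++ A2Block G i)[1 + 3 * k + t]? := by
    rw [show aStart G i + (1 + 3 * k) + t = aStart G i + (1 + 3 * k + t) by omega]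
    exact getX_a G i _ (by omega)
  have h2 : (genomeX G)[18 * i.val + (1 + 5 * k) + t]?
      = (vertexBlockX G i)[1 + 5 * k + t]? := by
    rw [show 18 * i.val + (1 + 5 * k) + t = 18 * i.val + (1 + 5 * k + t) by omega]
    exact getX_v G i _ (by omega)
  rw [h1, h2, hvb, List.getElem?_append, if_pos (by rw [A1Block_length]; omega)]
  interval_cases k <;> interval_cases t <;> rfl

lemma nthInc_facts (i : Fin n) (hdeg : G.degree i = 3) (k : ℕ) (hk : k < 3) :
    nthInc G i k ∈ edgePairs G ∧ (nthInc G i k).1 < (nthInc G i k).2 ∧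
      ((nthInc G i k).1 = i ∨ (nthInc G i k).2 = i) := by
  have h := (mem_incEdges G).1 (nthInc_mem G hdeg hk)
  exact ⟨h.1, ((mem_edgePairs G).1 h.1).1, h.2⟩

lemma getX_venc (i : Fin n) (hdeg : G.degree i = 3) (k t : ℕ) (hk : k < 3) (ht : t < 3) :
    (genomeX G)[eStart G (nthInc G i k) + encOff i (nthInc G i k) + t]? =
      (genomeX G)[18 * i.val + (3 + 5 * k) + t]? := by
  obtain ⟨he, hlt, hio⟩ := nthInc_facts G i hdeg k hk
  set e := nthInc G i k with hE
  obtain ⟨a₀, a₁, a₂, b₀, b₁, b₂, c₀, c₁, c₂, h0, h1, h2, hvb⟩ := vb_get G i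
  have hR : (genomeX G)[18 * i.val + (3 + 5 * k) + t]?
      = (enc G i e)[t]? := by
    rw [show 18 * i.val + (3 + 5 * k) + t = 18 * i.val + (3 + 5 * k + t) by omega,
      getX_v G i _ (by omega), hvb]
    interval_cases k <;> [rw [hE, h0]; rw [hE, h1]; rw [hE, h2]] <;>
      interval_cases t <;> rfl
  have hL : (genomeX G)[eStart G e + encOff i e + t]?
      = (edgeBlockX G e)[encOff i e + t]? := by
    rw [show eStart G e + encOff i e + t = eStart G e + (encOff i e + t) by omega]
    refine getX_e G he _ ?_
    rw [encOff]; split_ifs <;> omega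
  rw [hL, hR]
  rcases hio with hio | hio
  · rw [encOff, if_pos hio.symm, enc, encL, if_pos hio.symm, encR, if_pos hio.symm, edgeBlockX]
    rw [← hio]
    interval_cases t <;> rfl
  · have hne : ¬ (i = e.1) := by rw [hio] at hlt; exact fun h => absurd (h ▸ hlt) (lt_irrefl _)
    rw [encOff, if_neg hne, enc, encL, if_neg hne, encR, if_neg hne, edgeBlockX]
    rw [← hio]
    interval_cases t <;> rfl


/-- The four duplications of `z`-pairs in `B_X-VE(v_i)`. -/
def zOp (i : Fin n) (k : ℕ) : Op :=
  ⟨vStart i + (1 + 5 * k), 2, some (aStart G i + (1 + 3 * k))⟩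

/-- The three duplications of encodings in `B_X-VE(v_i)`. -/
def encOpA (i : Fin n) (k : ℕ) : Op :=
  ⟨vStart i + (3 + 5 * k), 3, some (eStart G (nthInc G i k) + encOff i (nthInc G i k))⟩

/-- The loss labeling the four unmatched characters of `B_X-VE(e)`. -/
def edgeOp (e : Fin n × Fin n) : Op := ⟨eStart G e + 1, 4, none⟩

def typeAList (i : Fin n) : List Op :=
  [zOp G i 0, zOp G i 1, zOp G i 2, zOp G i 3, encOpA G i 0, encOpA G i 1, encOpA G i 2]

def opList : List Op :=
  ((List.finRange n).flatMap fun i => typeAList G i) ++ (edgePairs G).map (edgeOp G)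

def myL : Finset Op := (opList G).toFinset

lemma mem_myL {o : Op} :
    o ∈ myL G ↔ (∃ i : Fin n, (∃ k < 4, o = zOp G i k) ∨ (∃ k < 3, o = encOpA G i k)) ∨
      (∃ e ∈ edgePairs G, o = edgeOp G e) := by
  rw [myL, List.mem_toFinset, opList, List.mem_append, List.mem_flatMap, List.mem_map]
  constructor
  · rintro (⟨i, _, hi⟩ | ⟨e, he, rfl⟩)
    · refine Or.inl ⟨i, ?_⟩
      simp only [typeAList, List.mem_cons, List.not_mem_nil, or_false] at hi
      rcases hi with rfl | rfl | rfl | rfl | rfl | rfl | rfl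
      · exact Or.inl ⟨0, by omega, rfl⟩
      · exact Or.inl ⟨1, by omega, rfl⟩
      · exact Or.inl ⟨2, by omega, rfl⟩
      · exact Or.inl ⟨3, by omega, rfl⟩
      · exact Or.inr ⟨0, by omega, rfl⟩
      · exact Or.inr ⟨1, by omega, rfl⟩
      · exact Or.inr ⟨2, by omega, rfl⟩
    · exact Or.inr ⟨e, he, rfl⟩
  · rintro (⟨i, ⟨k, hk, rfl⟩ | ⟨k, hk, rfl⟩⟩ | ⟨e, he, rfl⟩)
    · refine Or.inl ⟨i, List.mem_finRange i, ?_⟩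
      interval_cases k <;> simp [typeAList]
    · refine Or.inl ⟨i, List.mem_finRange i, ?_⟩
      interval_cases k <;> simp [typeAList]
    · exact Or.inr ⟨e, he, rfl⟩

lemma valid_z (i : Fin n) (k : ℕ) (hk : k < 4) :
    Op.valid (genomeX G) (zOp G i k) := by
  have hin : i.val < n := i.isLt
  refine ⟨le_refl 1 |>.trans (by simp [zOp, encOpA, edgeOp]), by rw [genomeX_length]; simp only [zOp, vStart]; omega, ?_⟩
  rintro s hs
  obtain rfl : aStart G i + (1 + 3 * k) = s := by
    simpa only [zOp, Option.some_inj] using hs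
  refine ⟨by simp only [zOp, vStart, aStart]; omega,
    by rw [genomeX_length]; simp only [zOp, aStart]; omega, ?_⟩
  intro t ht
  simp only [zOp] at ht ⊢
  have := getX_vz G i k t hk ht
  rw [vStart]
  exact this

lemma valid_enc (i : Fin n) (hdeg : G.degree i = 3) (k : ℕ) (hk : k < 3) :
    Op.valid (genomeX G) (encOpA G i k) := by
  have hin : i.val < n := i.isLt
  obtain ⟨he, _, _⟩ := nthInc_facts G i hdeg k hk
  have hidx := (idxOf_spec _ _ he).1
  have hoff : encOff i (nthInc G i k) ≤ 2 := by rw [encOff]; split_ifs <;> omega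
  refine ⟨le_refl 1 |>.trans (by simp [zOp, encOpA, edgeOp]), by rw [genomeX_length]; simp only [encOpA, vStart]; omega, ?_⟩
  rintro s hs
  obtain rfl : eStart G (nthInc G i k) + encOff i (nthInc G i k) = s := by
    simpa only [encOpA, Option.some_inj] using hs
  refine ⟨by simp only [encOpA, vStart, eStart]; omega,
    by rw [genomeX_length]; simp only [encOpA, eStart]; rw [eStart] at *; omega, ?_⟩
  intro t ht
  simp only [encOpA] at ht ⊢
  have := getX_venc G i hdeg k t hk ht
  rw [vStart]
  exact this

lemma valid_edge {e : Fin n × Fin n} (he : e ∈ edgePairs G) :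
    Op.valid (genomeX G) (edgeOp G e) := by
  have hidx := (idxOf_spec _ _ he).1
  refine ⟨le_refl 1 |>.trans (by simp [zOp, encOpA, edgeOp]), ?_, by rintro s ⟨⟩⟩
  rw [genomeX_length]; simp only [edgeOp, eStart]; omega

lemma myL_valid (hcubic : ∀ v : Fin n, G.degree v = 3) :
    ∀ o ∈ myL G, o.valid (genomeX G) := by
  intro o ho
  rcases (mem_myL G).1 ho with ⟨i, ⟨k, hk, rfl⟩ | ⟨k, hk, rfl⟩⟩ | ⟨e, he, rfl⟩
  · exact valid_z G i k hk
  · exact valid_enc G i (hcubic i) k hk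
  · exact valid_edge G he


lemma myL_unmatched :
    ∀ o ∈ myL G, ∀ p, o.covers p → UnmatchedX G p := by
  intro o ho p hp
  rw [unmatched_iff]
  rcases (mem_myL G).1 ho with ⟨i, ⟨k, hk, rfl⟩ | ⟨k, hk, rfl⟩⟩ | ⟨e, he, rfl⟩
  · have hin : i.val < n := i.isLt
    simp only [Op.covers, zOp, vStart] at hp
    left; interval_cases k <;> omega
  · have hin : i.val < n := i.isLt
    simp only [Op.covers, encOpA, vStart] at hp
    left; interval_cases k <;> omega
  · have hidx := (idxOf_spec _ _ he).1
    simp only [Op.covers, edgeOp, eStart] at hp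
    right; omega

lemma myL_covers :
    ∀ p, UnmatchedX G p → ∃ o ∈ myL G, o.covers p := by
  intro p hp
  rw [unmatched_iff] at hp
  rcases hp with ⟨h1, h0⟩ | ⟨h1, h2, h0⟩
  · obtain ⟨i, hival⟩ : ∃ i : Fin n, i.val = p / 18 := ⟨⟨p / 18, by omega⟩, rfl⟩
    have hiv : 18 * i.val ≤ p ∧ p < 18 * i.val + 18 := by omega
    have hz : ∀ k : ℕ, k < 4 → 18 * i.val + (1 + 5 * k) ≤ p → p < 18 * i.val + (1 + 5 * k) + 2 →
        ∃ o ∈ myL G, o.covers p := by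
      intro k hk ha hb
      exact ⟨zOp G i k, (mem_myL G).2 (Or.inl ⟨i, Or.inl ⟨k, hk, rfl⟩⟩),
        by simp only [Op.covers, zOp, vStart]; omega⟩
    have henc : ∀ k : ℕ, k < 3 → 18 * i.val + (3 + 5 * k) ≤ p → p < 18 * i.val + (3 + 5 * k) + 3 →
        ∃ o ∈ myL G, o.covers p := by
      intro k hk ha hb
      exact ⟨encOpA G i k, (mem_myL G).2 (Or.inl ⟨i, Or.inr ⟨k, hk, rfl⟩⟩),
        by simp only [Op.covers, encOpA, vStart]; omega⟩
    obtain ⟨ha, hb⟩ := hiv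
    obtain ⟨r, hr1, hr2, hpr⟩ : ∃ r, 1 ≤ r ∧ r < 18 ∧ p = 18 * i.val + r :=
      ⟨p - 18 * i.val, by omega, by omega, by omega⟩
    interval_cases r <;>
      first
        | exact hz 0 (by omega) (by omega) (by omega)
        | exact hz 1 (by omega) (by omega) (by omega)
        | exact hz 2 (by omega) (by omega) (by omega)
        | exact hz 3 (by omega) (by omega) (by omega)
        | exact henc 0 (by omega) (by omega) (by omega)
        | exact henc 1 (by omega) (by omega) (by omega)
        | exact henc 2 (by omega) (by omega) (by omega)
  · set j : ℕ := (p - 18 * n) / 5 with hj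
    have hjM : j < (edgePairs G).length := by omega
    set e := (edgePairs G)[j] with he
    have hmem : e ∈ edgePairs G := List.getElem_mem hjM
    have hidx : (edgePairs G).idxOf e = j := by
      have h1 := (idxOf_spec e _ hmem).1
      have h2 := (idxOf_spec e _ hmem).2
      rw [List.getElem?_eq_getElem h1, Option.some_inj] at h2
      exact (List.Nodup.getElem_inj_iff (nodup_edgePairs G)).1 h2
    refine ⟨edgeOp G e, (mem_myL G).2 (Or.inr ⟨e, hmem, rfl⟩), ?_⟩
    simp only [Op.covers, edgeOp, eStart, hidx]
    omega

lemma myL_disjoint :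
    ∀ o ∈ myL G, ∀ o' ∈ myL G, ∀ p, o.covers p → o'.covers p → o = o' := by
  intro o ho o' ho' p hp hq
  rcases (mem_myL G).1 ho with ⟨i, ⟨k, hk, rfl⟩ | ⟨k, hk, rfl⟩⟩ | ⟨e, he, rfl⟩ <;>
    rcases (mem_myL G).1 ho' with ⟨i', ⟨k', hk', rfl⟩ | ⟨k', hk', rfl⟩⟩ | ⟨e', he', rfl⟩ <;>
    [skip; skip; (have hidx' := (idxOf_spec e' _ he').1);
     skip; skip; (have hidx' := (idxOf_spec e' _ he').1);
     (have hidx := (idxOf_spec e _ he).1); (have hidx := (idxOf_spec e _ he).1);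
     (have hidx := (idxOf_spec e _ he).1; have hidx' := (idxOf_spec e' _ he').1)] <;>
    simp only [Op.covers, zOp, encOpA, edgeOp, vStart, eStart] at hp hq <;>
    first
      | (obtain rfl : i = i' := Fin.ext (by
           have := i.isLt; have := i'.isLt
           interval_cases k <;> interval_cases k' <;> omega)
         obtain rfl : k = k' := by omega
         rfl)
      | (exfalso; have := i.isLt; omega)
      | (exfalso; have := i'.isLt; omega)
      | (exfalso; have := i.isLt; have := i'.isLt;
         interval_cases k <;> interval_cases k' <;> omega)
      | (have hjj : (edgePairs G).idxOf e = (edgePairs G).idxOf e' := by omega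
         obtain rfl : e = e' := by
           have h1 := (idxOf_spec e _ he).2
           have h2 := (idxOf_spec e' _ he').2
           rw [hjj, h2, Option.some_inj] at h1
           exact h1.symm
         rfl)


lemma myL_feasible : Feasible (myL G) := by
  have step : ∀ a b, dupArc (myL G) a b →
      (if a.src = none then 0 else 1) < (if b.src = none then 0 else 1) := by
    rintro a b ⟨ha, hb, s, hbs, p, hap, hsp1, hsp2⟩
    rcases (mem_myL G).1 hb with ⟨i, ⟨k, hk, rfl⟩ | ⟨k, hk, rfl⟩⟩ | ⟨e, he, rfl⟩
    · exfalso
      obtain rfl : aStart G i + (1 + 3 * k) = s := by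
        simpa only [zOp, Option.some_inj] using hbs
      have hU := myL_unmatched G a ha p hap
      rw [unmatched_iff] at hU
      have hin : i.val < n := i.isLt
      simp only [zOp] at hsp2
      rw [aStart] at hsp1
      rcases hU with ⟨h1, h2⟩ | ⟨h1, h2, h3⟩ <;> omega
    · obtain rfl : eStart G (nthInc G i k) + encOff i (nthInc G i k) = s := by
        simpa only [encOpA, Option.some_inj] using hbs
      have hs18 : 18 * n ≤ eStart G (nthInc G i k) + encOff i (nthInc G i k) := by
        rw [eStart]; omega
      have hasrc : a.src = none := by
        rcases (mem_myL G).1 ha with ⟨i', ⟨k', hk', rfl⟩ | ⟨k', hk', rfl⟩⟩ | ⟨e', he', rfl⟩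
        · exfalso
          have := i'.isLt
          simp only [Op.covers, zOp, vStart] at hap
          omega
        · exfalso
          have := i'.isLt
          simp only [Op.covers, encOpA, vStart] at hap
          omega
        · rfl
      rw [hasrc]
      simp [encOpA]
    · simp [edgeOp] at hbs
  intro o h
  have mono : ∀ a b, Relation.TransGen (dupArc (myL G)) a b →
      (if a.src = none then 0 else 1) < (if b.src = none then 0 else 1) := by
    intro a b h
    induction h with
    | single h1 => exact step _ _ h1
    | tail _ h2 ih => exact ih.trans (step _ _ h2)
  exact lt_irrefl _ (mono o o h)

lemma cost_myL : cost (myL G) ≤ 7 * n + 4 * (edgePairs G).length := by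
  refine le_trans (sum_toFinset_le _ _) ?_
  rw [opList, List.map_append, List.sum_append, map_flatMap_sum]
  have h1 : ((List.finRange n).map fun i => ((typeAList G i).map Op.cost).sum)
      = (List.finRange n).map fun _ => 7 := by
    refine List.map_congr_left fun i _ => ?_
    simp [typeAList, Op.cost, zOp, encOpA]
  have h2 : ((edgePairs G).map (edgeOp G)).map Op.cost = (edgePairs G).map fun _ => 4 := by
    rw [List.map_map]
    refine List.map_congr_left fun e _ => ?_
    simp [Op.cost, edgeOp]
  rw [h1, h2, sum_map_const, sum_map_const, List.length_finRange]

lemma vc_bounds (hcubic : ∀ v : Fin n, G.degree v = 3)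
    (C : Finset (Fin n)) (hC : IsVC G C) :
    n ≤ 2 * C.card ∧ (edgePairs G).length ≤ 3 * C.card := by
  classical
  have hsub : G.edgeFinset ⊆ C.biUnion fun v => G.incidenceFinset v := by
    intro e he
    induction e with
    | _ a b =>
      rw [SimpleGraph.mem_edgeFinset, SimpleGraph.mem_edgeSet] at he
      rcases hC he with h | h
      · exact Finset.mem_biUnion.2 ⟨a, h, by
          rw [SimpleGraph.mem_incidenceFinset]
          exact ⟨(SimpleGraph.mem_edgeSet G).2 he, Sym2.mem_mk_left a b⟩⟩
      · exact Finset.mem_biUnion.2 ⟨b, h, by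
          rw [SimpleGraph.mem_incidenceFinset]
          exact ⟨(SimpleGraph.mem_edgeSet G).2 he, Sym2.mem_mk_right a b⟩⟩
  have hE3 : G.edgeFinset.card ≤ 3 * C.card := by
    refine le_trans (Finset.card_le_card hsub) (le_trans Finset.card_biUnion_le ?_)
    rw [show (3 : ℕ) * C.card = ∑ _v ∈ C, 3 by rw [Finset.sum_const]; ring]
    refine Finset.sum_le_sum fun v _ => ?_
    rw [SimpleGraph.card_incidenceFinset_eq_degree, hcubic v]
  have hhs : 3 * n = 2 * G.edgeFinset.card := by
    have := G.sum_degrees_eq_twice_card_edges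
    rw [Finset.sum_congr rfl fun v _ => hcubic v, Finset.sum_const, Finset.card_univ,
      Fintype.card_fin, smul_eq_mul] at this
    omega
  have hM : (edgePairs G).length ≤ G.edgeFinset.card := by
    rw [← List.toFinset_card_of_nodup (nodup_edgePairs G)]
    refine Finset.card_le_card_of_injOn (fun e => s(e.1, e.2)) ?_ ?_
    · intro e hee
      rw [Finset.mem_coe, List.mem_toFinset, mem_edgePairs] at hee
      rw [Finset.mem_coe, SimpleGraph.mem_edgeFinset, SimpleGraph.mem_edgeSet]
      exact hee.2
    · intro a hha b hhb hab
      rw [Finset.mem_coe, List.mem_toFinset, mem_edgePairs] at hha hhb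
      rw [Sym2.eq_iff] at hab
      rcases hab with ⟨h1, h2⟩ | ⟨h1, h2⟩
      · exact Prod.ext h1 h2
      · exfalso
        have := hha.1; have := hhb.1
        omega
  omega


end Reduction
end MLA

open MLA in
/-- The minimum cost of a feasible labeling of the MLA instance
`(X, Y)` corresponding to a cubic graph `G` is at most `41·τ(G)`, where `τ(G)`
is the minimum size of a vertex cover of `G`. -/
theorem min_cost_le_41_tau {n : ℕ} (G : SimpleGraph (Fin n))
    [DecidableRel G.Adj] (hcubic : ∀ v : Fin n, G.degree v = 3) :
    sInf {c : ℕ | ∃ L : Finset Op,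
        IsLabeling (genomeX G) (UnmatchedX G) L ∧ Feasible L ∧ cost L = c} ≤
      41 * sInf {k : ℕ | ∃ C : Finset (Fin n), IsVC G C ∧ C.card = k} := by
  have hne : {k : ℕ | ∃ C : Finset (Fin n), IsVC G C ∧ C.card = k}.Nonempty :=
    ⟨(Finset.univ : Finset (Fin n)).card, Finset.univ,
      fun u v _ => Or.inl (Finset.mem_univ u), rfl⟩
  obtain ⟨C, hC, hcard⟩ := Nat.sInf_mem hne
  obtain ⟨hn2, hM3⟩ := vc_bounds G hcubic C hC
  refine le_trans (Nat.sInf_le ⟨myL G,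
    ⟨myL_valid G hcubic, myL_unmatched G, myL_covers G, myL_disjoint G⟩,
    myL_feasible G, rfl⟩) ?_
  have h1 := cost_myL G
  omega
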